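/- Let s,x,y,t be complex numbers with sy + xt + 1 = x^2 + y^2. Suppose F_1,...,F_6 and G_1,...,G_6 satisfy F_4 = F_1 + sF_2 + xF_3, F_5 = xF_2 + yF_3, F_6 = F_1 + yF_2 + tF_3 (same for G). Define H_1 = F_1G_1 + F_2G_2 + F_3G_3, H_2 = F_1G_2 + F_2G_4 + F_3G_5, H_3 = F_1G_3 + F_2G_5 + F_3G_6, H_4 = F_2G_2 + F_4G_4 + F_5G_5, H_5 = F_2G_3 + F_4G_5 + F_5G_6, H_6 = F_3G_3 + F_5G_5 + F_6G_6. Then H_4 = H_1 + sH_2 + xH_3, H_5 = xH_2 + yH_3, and H_6 = H_1 + yH_2 + tH_3. -/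
import Mathlib


theorem stmt_5 (s x y t : ℂ) (hst : s*y + x*t + 1 = x^2 + y^2)
    (F1 F2 F3 F4 F5 F6 G1 G2 G3 G4 G5 G6 : ℂ)
    (hF4 : F4 = F1 + s*F2 + x*F3) (hF5 : F5 = x*F2 + y*F3) (hF6 : F6 = F1 + y*F2 + t*F3)
    (hG4 : G4 = G1 + s*G2 + x*G3) (hG5 : G5 = x*G2 + y*G3) (hG6 : G6 = G1 + y*G2 + t*G3)
    (H1 H2 H3 H4 H5 H6 : ℂ)
    (hH1 : H1 = F1*G1 + F2*G2 + F3*G3)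
    (hH2 : H2 = F1*G2 + F2*G4 + F3*G5)
    (hH3 : H3 = F1*G3 + F2*G5 + F3*G6)
    (hH4 : H4 = F2*G2 + F4*G4 + F5*G5)
    (hH5 : H5 = F2*G3 + F4*G5 + F5*G6)
    (hH6 : H6 = F3*G3 + F5*G5 + F6*G6) :
    H4 = H1 + s*H2 + x*H3 ∧ H5 = x*H2 + y*H3 ∧ H6 = H1 + y*H2 + t*H3 := by
  subst hF4 hF5 hF6 hG4 hG5 hG6 hH1 hH2 hH3 hH4 hH5 hH6
  refine ⟨?_, ?_, ?_⟩
  · linear_combination (-(F3*G3)) * hst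
  · linear_combination (F2*G3) * hst
  · linear_combination (-(F2*G2)) * hst
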